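/- Let k ≥ 1 be an integer, and let x_1,…,x_m and y_1,…,y_n be real numbers (m, n ≥ 1). Then sup_{f ∈ F_k} |(1/m)∑_{i=1}^m f(x_i) − (1/n)∑_{j=1}^n f(y_j)| = max{ sup_{t ≥ 0} (1/k!)|(1/m)∑_{i=1}^m (x_i−t)_+^k − (1/n)∑_{j=1}^n (y_j−t)_+^k| , sup_{t ≤ 0} (1/k!)|(1/m)∑_{i=1}^m (t−x_i)_+^k − (1/n)∑_{j=1}^n (t−y_j)_+^k| }. -/

import Mathlib

open MeasureTheory Filter Set

/-- The class `F_k`: functions `f(x) = ∫_0^x ((x-s)^(k-1)/(k-1)!) h(s) ds` for some `h`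
with total variation at most 1 over ℝ and with a one-sided limit 0 at 0 (from the right
or from the left). -/
def Fk (k : ℕ) : Set (ℝ → ℝ) :=
  {f | ∃ h : ℝ → ℝ, eVariationOn h Set.univ ≤ 1 ∧
    (Tendsto h (nhdsWithin 0 (Set.Ioi 0)) (nhds 0) ∨
     Tendsto h (nhdsWithin 0 (Set.Iio 0)) (nhds 0)) ∧
    ∀ x : ℝ, f x = ∫ s in (0:ℝ)..x, ((x - s) ^ (k - 1) / (Nat.factorial (k - 1) : ℝ)) * h s}

namespace Stmt2Aux


noncomputable def gk (j : ℕ) (z s : ℝ) : ℝ := (z - s) ^ j / (Nat.factorial j : ℝ)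

noncomputable def wfun (j : ℕ) (z : ℝ) : ℝ → ℝ :=
  fun s => (Ioc 0 z).indicator (gk j z) s - (Ioc z 0).indicator (gk j z) s

lemma gk_cont (j : ℕ) (z : ℝ) : Continuous (gk j z) := by
  unfold gk; fun_prop

lemma wfun_meas (j : ℕ) (z : ℝ) : Measurable (wfun j z) := by
  unfold wfun
  exact ((((gk_cont j z).measurable).indicator measurableSet_Ioc).sub
    (((gk_cont j z).measurable).indicator measurableSet_Ioc))

lemma wfun_integrable (j : ℕ) (z : ℝ) : Integrable (wfun j z) := by
  unfold wfun
  have h1 : IntegrableOn (gk j z) (Ioc 0 z) := by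
    exact (gk_cont j z).integrableOn_Ioc
  have h2 : IntegrableOn (gk j z) (Ioc z 0) := by
    exact (gk_cont j z).integrableOn_Ioc
  exact (h1.integrable_indicator measurableSet_Ioc).sub
    (h2.integrable_indicator measurableSet_Ioc)

lemma poly_int (j : ℕ) (t z : ℝ) :
    ∫ s in t..z, gk j z s = (z - t) ^ (j + 1) / (Nat.factorial (j + 1) : ℝ) := by
  unfold gk
  rw [intervalIntegral.integral_div]
  rw [intervalIntegral.integral_comp_sub_left (fun u => u ^ j) z, sub_self]
  rw [integral_pow]
  rw [Nat.factorial_succ]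
  have hj : ((j:ℝ) + 1) ≠ 0 := by positivity
  have hf : ((Nat.factorial j : ℝ)) ≠ 0 := by
    exact_mod_cast Nat.factorial_ne_zero j
  push_cast
  field_simp
  simp

lemma poly_int2 (j : ℕ) (t z : ℝ) :
    ∫ s in z..t, gk j z s = -((z - t) ^ (j + 1)) / (Nat.factorial (j + 1) : ℝ) := by
  rw [intervalIntegral.integral_symm, poly_int]
  ring



section BV

variable {h : ℝ → ℝ}

noncomputable def vv (h : ℝ → ℝ) : ℝ → ℝ := variationOnFromTo h univ 0

lemma vv_sub (hvar : BoundedVariationOn h univ) (a b : ℝ) :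
    vv h b - vv h a = variationOnFromTo h univ a b := by
  have := variationOnFromTo.add hvar.locallyBoundedVariationOn
    (mem_univ (0:ℝ)) (mem_univ a) (mem_univ b)
  unfold vv; linarith

lemma key_bound (hvar : BoundedVariationOn h univ) {a b : ℝ} (hab : a ≤ b) : |h b - h a| ≤ vv h b - vv h a := by
  rw [vv_sub hvar, variationOnFromTo.eq_of_le h univ hab]
  have h1 : edist (h a) (h b) ≤ eVariationOn h (univ ∩ Icc a b) :=
    eVariationOn.edist_le h ⟨mem_univ a, le_rfl, hab⟩ ⟨mem_univ b, hab, le_rfl⟩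
  have h2 : eVariationOn h (univ ∩ Icc a b) ≠ ⊤ :=
    ne_top_of_le_ne_top hvar (eVariationOn.mono h inter_subset_left)
  have := ENNReal.toReal_mono h2 h1
  rw [edist_dist, ENNReal.toReal_ofReal dist_nonneg, dist_comm, Real.dist_eq] at this
  exact this

lemma vv_mono (hvar : BoundedVariationOn h univ) : Monotone (vv h) := by
  intro a b hab
  have := key_bound hvar hab
  have h0 : (0:ℝ) ≤ |h b - h a| := abs_nonneg _
  linarith

lemma vv_bound (hvar : BoundedVariationOn h univ) (x : ℝ) : |vv h x| ≤ (eVariationOn h univ).toReal := by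
  have hmono : ∀ s : Set ℝ, s ⊆ univ →
      (eVariationOn h s).toReal ≤ (eVariationOn h univ).toReal := fun s hs =>
    ENNReal.toReal_mono hvar (eVariationOn.mono h hs)
  rcases le_total 0 x with hx | hx
  · rw [vv, variationOnFromTo.eq_of_le h univ hx, abs_of_nonneg ENNReal.toReal_nonneg]
    exact hmono _ inter_subset_left
  · rw [vv, variationOnFromTo.eq_of_ge h univ hx, abs_neg,
      abs_of_nonneg ENNReal.toReal_nonneg]
    exact hmono _ inter_subset_left

lemma h_bound (hvar : BoundedVariationOn h univ) (x : ℝ) : |h x| ≤ |h 0| + (eVariationOn h univ).toReal := by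
  rcases le_total 0 x with hx | hx
  · have := key_bound hvar hx
    have h2 := vv_bound hvar x
    have h3 := vv_bound hvar 0
    have h4 : |h x| - |h 0| ≤ |h x - h 0| := abs_sub_abs_le_abs_sub _ _
    have h5 : vv h x ≤ (eVariationOn h univ).toReal := (abs_le.1 h2).2
    have h6 : -(eVariationOn h univ).toReal ≤ vv h 0 := (abs_le.1 h3).1
    have h0 : vv h 0 = 0 := variationOnFromTo.self h univ 0
    linarith
  · have := key_bound hvar hx
    have h2 := vv_bound hvar x
    have h4 : |h 0| - |h x| ≤ |h 0 - h x| := abs_sub_abs_le_abs_sub _ _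
    have h0 : vv h 0 = 0 := variationOnFromTo.self h univ 0
    have h5 : -(eVariationOn h univ).toReal ≤ vv h x := (abs_le.1 h2).1
    have h7 : |h x| - |h 0| ≤ |h 0 - h x| := by
      rw [abs_sub_comm]; exact abs_sub_abs_le_abs_sub _ _
    linarith

noncomputable def pp (h : ℝ → ℝ) : ℝ → ℝ := fun x => (vv h x + h x) / 2
noncomputable def qq (h : ℝ → ℝ) : ℝ → ℝ := fun x => (vv h x - h x) / 2

lemma pp_mono (hvar : BoundedVariationOn h univ) : Monotone (pp h) := by
  intro a b hab
  have := key_bound hvar hab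
  have := (abs_le.1 this).1
  unfold pp; linarith

lemma qq_mono (hvar : BoundedVariationOn h univ) : Monotone (qq h) := by
  intro a b hab
  have := key_bound hvar hab
  have := (abs_le.1 this).2
  unfold qq; linarith

lemma pp_sub_qq (x : ℝ) : pp h x - qq h x = h x := by
  unfold pp qq; ring

lemma pp_bound (hvar : BoundedVariationOn h univ) (x : ℝ) :
    |pp h x| ≤ |h 0| + (eVariationOn h univ).toReal + (eVariationOn h univ).toReal := by
  have h1 := vv_bound hvar x
  have h2 := h_bound hvar x
  have h3 : |pp h x| ≤ (|vv h x| + |h x|) / 2 := by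
    unfold pp
    rw [abs_div, abs_of_nonneg (by norm_num : (0:ℝ) ≤ 2)]
    have := abs_add_le (vv h x) (h x)
    linarith
  have h4 : (0:ℝ) ≤ |h x| := abs_nonneg _
  have h5 : (0:ℝ) ≤ |vv h x| := abs_nonneg _
  linarith

lemma qq_bound (hvar : BoundedVariationOn h univ) (x : ℝ) :
    |qq h x| ≤ |h 0| + (eVariationOn h univ).toReal + (eVariationOn h univ).toReal := by
  have h1 := vv_bound hvar x
  have h2 := h_bound hvar x
  have h3 : |qq h x| ≤ (|vv h x| + |h x|) / 2 := by
    unfold qq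
    rw [abs_div, abs_of_nonneg (by norm_num : (0:ℝ) ≤ 2)]
    have := abs_sub (vv h x) (h x)
    linarith
  have h4 : (0:ℝ) ≤ |h x| := abs_nonneg _
  have h5 : (0:ℝ) ≤ |vv h x| := abs_nonneg _
  linarith

lemma h_meas (hvar : BoundedVariationOn h univ) : Measurable h := by
  have : h = fun x => pp h x - qq h x := by
    funext x; rw [pp_sub_qq]
  rw [this]
  exact ((pp_mono hvar).measurable).sub ((qq_mono hvar).measurable)

end BV


noncomputable def Ff (W : ℝ → ℝ) : ℝ → ℝ :=
  fun t => if 0 < t then ∫ s in Ici t, W s else -∫ s in Iio t, W s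

noncomputable def psi (s t : ℝ) : ℝ :=
  (if 0 < t ∧ t ≤ s then (1:ℝ) else 0) - (if s < t ∧ t ≤ 0 then (1:ℝ) else 0)

lemma psi_abs_le (s t : ℝ) : |psi s t| ≤ 1 := by
  unfold psi; split_ifs <;> norm_num

lemma psi_integral (P : StieltjesFunction ℝ) [IsFiniteMeasure P.measure] (s : ℝ) :
    ∫ t, psi s t ∂P.measure = P s - P 0 := by
  rcases le_total 0 s with hs | hs
  · have hpt : ∀ t, psi s t = (Ioc (0:ℝ) s).indicator (fun _ => (1:ℝ)) t := by
      intro t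
      unfold psi
      rw [Set.indicator_apply]
      rcases lt_or_ge s t with h1 | h1
      · have : ¬ (0 < t ∧ t ≤ s) := fun ⟨_, h⟩ => absurd h (not_le.2 h1)
        rw [if_neg this]
        by_cases h2 : t ≤ 0
        · exact absurd (lt_of_le_of_lt hs h1) (not_lt.2 h2)
        · rw [if_neg (fun hc => h2 hc.2), if_neg (fun hc : t ∈ Ioc (0:ℝ) s => absurd hc.2 (not_le.2 h1))]
          ring
      · have : ¬ (s < t ∧ t ≤ 0) := fun ⟨h, _⟩ => absurd h (not_lt.2 h1)
        rw [if_neg this, sub_zero]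
        simp only [mem_Ioc]
    simp only [hpt]
    rw [integral_indicator_const (1:ℝ) measurableSet_Ioc, measureReal_def, P.measure_Ioc,
      ENNReal.toReal_ofReal (sub_nonneg.2 (P.mono hs))]
    simp
  · have hpt : ∀ t, psi s t = - (Ioc s (0:ℝ)).indicator (fun _ => (1:ℝ)) t := by
      intro t
      unfold psi
      rw [Set.indicator_apply]
      rcases lt_or_ge 0 t with h1 | h1
      · have h2 : ¬ (s < t ∧ t ≤ 0) := fun ⟨_, h⟩ => absurd h (not_le.2 h1)
        have h3 : ¬ (0 < t ∧ t ≤ s) := fun ⟨hc, h⟩ => absurd (h.trans hs) (not_le.2 hc)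
        rw [if_neg h2, if_neg h3, if_neg (fun hc : t ∈ Ioc s 0 => absurd hc.2 (not_le.2 h1))]
        ring
      · have h3 : ¬ (0 < t ∧ t ≤ s) := fun hc => absurd hc.1 (not_lt.2 h1)
        rw [if_neg h3, zero_sub]
        simp only [mem_Ioc]
    simp only [hpt]
    rw [integral_neg, integral_indicator_const (1:ℝ) measurableSet_Ioc, measureReal_def, P.measure_Ioc,
      ENNReal.toReal_ofReal (sub_nonneg.2 (P.mono hs))]
    simp

lemma psi_inner (W : ℝ → ℝ) (hWi : Integrable W) (t : ℝ) :
    ∫ s, W s * psi s t = Ff W t := by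
  unfold Ff
  by_cases h0 : 0 < t
  · have hpt : ∀ s, W s * psi s t = (Ici t).indicator W s := by
      intro s
      unfold psi
      simp only [Set.indicator_apply, mem_Ici]
      have h2 : ¬ (s < t ∧ t ≤ 0) := fun ⟨_, h⟩ => absurd h0 (not_lt.2 h)
      rw [if_neg h2, sub_zero]
      by_cases h3 : t ≤ s
      · rw [if_pos ⟨h0, h3⟩, if_pos h3, mul_one]
      · rw [if_neg (fun hc : 0 < t ∧ t ≤ s => h3 hc.2), if_neg h3, mul_zero]
    rw [if_pos h0]
    simp only [hpt]
    exact integral_indicator measurableSet_Ici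
  · have hpt : ∀ s, W s * psi s t = - (Iio t).indicator W s := by
      intro s
      unfold psi
      simp only [Set.indicator_apply, mem_Iio]
      have h2 : ¬ (0 < t ∧ t ≤ s) := fun hc => h0 hc.1
      rw [if_neg h2, zero_sub]
      by_cases h3 : s < t
      · rw [if_pos ⟨h3, not_lt.1 h0⟩, if_pos h3]; ring
      · rw [if_neg (fun hc : s < t ∧ t ≤ 0 => h3 hc.1), if_neg h3]; ring
    rw [if_neg h0]
    simp only [hpt]
    rw [integral_neg, integral_indicator measurableSet_Iio]

lemma swap_eq (W : ℝ → ℝ) (hWm : Measurable W) (hWi : Integrable W)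
    (P : StieltjesFunction ℝ) [IsFiniteMeasure P.measure] :
    ∫ s, W s * (P s - P 0) = ∫ t, Ff W t ∂P.measure := by
  have hmeas : AEStronglyMeasurable (Function.uncurry fun s t => W s * psi s t)
      (volume.prod P.measure) := by
    apply Measurable.aestronglyMeasurable
    apply Measurable.mul (hWm.comp measurable_fst)
    unfold psi
    apply Measurable.sub
    · refine Measurable.ite ?_ measurable_const measurable_const
      exact MeasurableSet.inter
        (measurable_snd measurableSet_Ioi)
        (measurableSet_le measurable_snd measurable_fst)
    · refine Measurable.ite ?_ measurable_const measurable_const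
      exact MeasurableSet.inter
        (measurableSet_lt measurable_fst measurable_snd)
        (measurable_snd measurableSet_Iic)
  have hint : Integrable (Function.uncurry fun s t => W s * psi s t)
      (volume.prod P.measure) := by
    have hbd : Integrable (fun z : ℝ × ℝ => |W z.1| * 1) (volume.prod P.measure) :=
      hWi.abs.mul_prod (integrable_const 1)
    refine hbd.mono' hmeas ?_
    refine ae_of_all _ fun z => ?_
    rw [Function.uncurry]
    calc ‖W z.1 * psi z.1 z.2‖ = |W z.1| * |psi z.1 z.2| := abs_mul _ _
    _ ≤ |W z.1| * 1 := by
        exact mul_le_mul_of_nonneg_left (psi_abs_le _ _) (abs_nonneg _)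
  calc ∫ s, W s * (P s - P 0)
      = ∫ s, ∫ t, W s * psi s t ∂P.measure := by
        apply integral_congr_ae
        refine ae_of_all _ fun s => ?_
        show W s * (P s - P 0) = ∫ t, W s * psi s t ∂P.measure
        rw [integral_const_mul, psi_integral]
    _ = ∫ t, (∫ s, W s * psi s t) ∂P.measure := integral_integral_swap hint
    _ = ∫ t, Ff W t ∂P.measure := by
        apply integral_congr_ae
        exact ae_of_all _ fun t => psi_inner W hWi t




lemma core {W h : ℝ → ℝ} (hWm : Measurable W) (hWi : Integrable W)
    (hvar : eVariationOn h univ ≤ 1)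
    (h0 : Tendsto h (nhdsWithin 0 (Ioi 0)) (nhds 0))
    {M : ℝ} (hG : ∀ t, 0 ≤ t → |∫ s in Ioi t, W s| ≤ M)
    (hH : ∀ t, t ≤ 0 → |∫ s in Iio t, W s| ≤ M) :
    |∫ s, W s * h s| ≤ M := by
  have hbv : BoundedVariationOn h univ := ne_top_of_le_ne_top ENNReal.one_ne_top hvar
  have hp : Monotone (pp h) := pp_mono hbv
  have hq : Monotone (qq h) := qq_mono hbv
  set C : ℝ := |h 0| + (eVariationOn h univ).toReal + (eVariationOn h univ).toReal with hC
  have hpb : ∀ x, |pp h x| ≤ C := pp_bound hbv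
  have hqb : ∀ x, |qq h x| ≤ C := qq_bound hbv
  set P : StieltjesFunction ℝ := hp.stieltjesFunction with hPdef
  set Q : StieltjesFunction ℝ := hq.stieltjesFunction with hQdef
  -- sandwich for P, Q
  have hPlow : ∀ x, pp h x ≤ P x := fun x => hp.le_rightLim le_rfl
  have hPhigh : ∀ x, P x ≤ pp h (x + 1) := fun x => hp.rightLim_le (lt_add_one x)
  have hQlow : ∀ x, qq h x ≤ Q x := fun x => hq.le_rightLim le_rfl
  have hQhigh : ∀ x, Q x ≤ qq h (x + 1) := fun x => hq.rightLim_le (lt_add_one x)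
  -- bounds on ranges
  have hpBddA : BddAbove (range (pp h)) := ⟨C, by rintro _ ⟨x, rfl⟩; exact (abs_le.1 (hpb x)).2⟩
  have hpBddB : BddBelow (range (pp h)) := ⟨-C, by rintro _ ⟨x, rfl⟩; exact (abs_le.1 (hpb x)).1⟩
  have hqBddA : BddAbove (range (qq h)) := ⟨C, by rintro _ ⟨x, rfl⟩; exact (abs_le.1 (hqb x)).2⟩
  have hqBddB : BddBelow (range (qq h)) := ⟨-C, by rintro _ ⟨x, rfl⟩; exact (abs_le.1 (hqb x)).1⟩
  -- limits
  set up := ⨆ x, pp h x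
  set lp := ⨅ x, pp h x
  set uq := ⨆ x, qq h x
  set lq := ⨅ x, qq h x
  have hptop : Tendsto (pp h) atTop (nhds up) := tendsto_atTop_ciSup hp hpBddA
  have hpbot : Tendsto (pp h) atBot (nhds lp) := tendsto_atBot_ciInf hp hpBddB
  have hqtop : Tendsto (qq h) atTop (nhds uq) := tendsto_atTop_ciSup hq hqBddA
  have hqbot : Tendsto (qq h) atBot (nhds lq) := tendsto_atBot_ciInf hq hqBddB
  have hshift_top : Tendsto (fun x : ℝ => pp h (x + 1)) atTop (nhds up) :=
    hptop.comp (tendsto_atTop_add_const_right atTop 1 tendsto_id)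
  have hshift_bot : Tendsto (fun x : ℝ => pp h (x + 1)) atBot (nhds lp) :=
    hpbot.comp (tendsto_atBot_add_const_right atBot 1 tendsto_id)
  have hshift_topq : Tendsto (fun x : ℝ => qq h (x + 1)) atTop (nhds uq) :=
    hqtop.comp (tendsto_atTop_add_const_right atTop 1 tendsto_id)
  have hshift_botq : Tendsto (fun x : ℝ => qq h (x + 1)) atBot (nhds lq) :=
    hqbot.comp (tendsto_atBot_add_const_right atBot 1 tendsto_id)
  have hPtop : Tendsto P atTop (nhds up) :=
    tendsto_of_tendsto_of_tendsto_of_le_of_le hptop hshift_top hPlow hPhigh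
  have hPbot : Tendsto P atBot (nhds lp) :=
    tendsto_of_tendsto_of_tendsto_of_le_of_le hpbot hshift_bot hPlow hPhigh
  have hQtop : Tendsto Q atTop (nhds uq) :=
    tendsto_of_tendsto_of_tendsto_of_le_of_le hqtop hshift_topq hQlow hQhigh
  have hQbot : Tendsto Q atBot (nhds lq) :=
    tendsto_of_tendsto_of_tendsto_of_le_of_le hqbot hshift_botq hQlow hQhigh
  haveI : IsFiniteMeasure P.measure := P.isFiniteMeasure hPbot hPtop
  haveI : IsFiniteMeasure Q.measure := Q.isFiniteMeasure hQbot hQtop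
  -- a.e. equalities
  have haeP : ∀ᵐ s, P s = pp h s := by
    have hz : volume {x | ¬ContinuousAt (pp h) x} = 0 :=
      (hp.countable_not_continuousAt).measure_zero _
    have : ∀ᵐ s, ContinuousAt (pp h) s := by
      rw [ae_iff]; exact hz
    filter_upwards [this] with s hs
    exact tendsto_nhds_unique (hp.tendsto_rightLim s)
      (hs.tendsto.mono_left nhdsWithin_le_nhds)
  have haeQ : ∀ᵐ s, Q s = qq h s := by
    have hz : volume {x | ¬ContinuousAt (qq h) x} = 0 :=
      (hq.countable_not_continuousAt).measure_zero _
    have : ∀ᵐ s, ContinuousAt (qq h) s := by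
      rw [ae_iff]; exact hz
    filter_upwards [this] with s hs
    exact tendsto_nhds_unique (hq.tendsto_rightLim s)
      (hs.tendsto.mono_left nhdsWithin_le_nhds)
  -- P 0 = Q 0
  have hPQ0 : P 0 = Q 0 := by
    have t1 : Tendsto (pp h) (nhdsWithin 0 (Ioi 0)) (nhds (P 0)) := hp.tendsto_rightLim 0
    have t2 : Tendsto (qq h) (nhdsWithin 0 (Ioi 0)) (nhds (Q 0)) := hq.tendsto_rightLim 0
    have t3 : Tendsto h (nhdsWithin 0 (Ioi 0)) (nhds (P 0 - Q 0)) := by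
      have := t1.sub t2
      have heq : (fun x => pp h x - qq h x) = h := funext fun x => pp_sub_qq x
      rwa [heq] at this
    have := tendsto_nhds_unique t3 h0
    linarith
  -- bounds on P, Q values
  have hPb : ∀ x, |P x| ≤ C := fun x => by
    have := hPlow x; have := hPhigh x
    have := (abs_le.1 (hpb x)).1; have := (abs_le.1 (hpb (x+1))).2
    rw [abs_le]; constructor <;> linarith
  have hQb : ∀ x, |Q x| ≤ C := fun x => by
    have := hQlow x; have := hQhigh x
    have := (abs_le.1 (hqb x)).1; have := (abs_le.1 (hqb (x+1))).2
    rw [abs_le]; constructor <;> linarith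
  -- integrabilities
  have hIP : Integrable (fun s => W s * (P s - P 0)) := by
    have : Integrable (fun s => (P s - P 0) * W s) :=
      hWi.bdd_mul (c := 2 * C)
        ((P.mono.measurable.sub measurable_const).aestronglyMeasurable)
        (ae_of_all _ fun s => by
          have := (abs_le.1 (hPb s)).1; have := (abs_le.1 (hPb s)).2
          have := (abs_le.1 (hPb 0)).1; have := (abs_le.1 (hPb 0)).2
          rw [Real.norm_eq_abs, abs_le]; constructor <;> linarith)
    simpa [mul_comm] using this
  have hIQ : Integrable (fun s => W s * (Q s - Q 0)) := by
    have : Integrable (fun s => (Q s - Q 0) * W s) :=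
      hWi.bdd_mul (c := 2 * C)
        ((Q.mono.measurable.sub measurable_const).aestronglyMeasurable)
        (ae_of_all _ fun s => by
          have := (abs_le.1 (hQb s)).1; have := (abs_le.1 (hQb s)).2
          have := (abs_le.1 (hQb 0)).1; have := (abs_le.1 (hQb 0)).2
          rw [Real.norm_eq_abs, abs_le]; constructor <;> linarith)
    simpa [mul_comm] using this
  -- main decomposition
  have hdecomp : ∫ s, W s * h s = (∫ t, Ff W t ∂P.measure) - ∫ t, Ff W t ∂Q.measure := by
    have hae : ∀ᵐ s, W s * h s = W s * (P s - P 0) - W s * (Q s - Q 0) := by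
      filter_upwards [haeP, haeQ] with s h1 h2
      rw [h1, h2, hPQ0, ← pp_sub_qq (h := h) s]
      ring
    rw [integral_congr_ae hae, integral_sub hIP hIQ,
      swap_eq W hWm hWi P, swap_eq W hWm hWi Q]
  -- bound on Ff
  have hM0 : 0 ≤ M := le_trans (abs_nonneg _) (hG 0 le_rfl)
  have hFb : ∀ t, ‖Ff W t‖ ≤ M := by
    intro t
    unfold Ff
    split_ifs with ht
    · rw [Real.norm_eq_abs, integral_Ici_eq_integral_Ioi]
      exact hG t ht.le
    · rw [Real.norm_eq_abs, abs_neg]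
      exact hH t (not_lt.1 ht)
  have hbP : |∫ t, Ff W t ∂P.measure| ≤ M * (P.measure univ).toReal := by
    have := norm_integral_le_of_norm_le_const (μ := P.measure) (ae_of_all _ hFb)
    rwa [Real.norm_eq_abs] at this
  have hbQ : |∫ t, Ff W t ∂Q.measure| ≤ M * (Q.measure univ).toReal := by
    have := norm_integral_le_of_norm_le_const (μ := Q.measure) (ae_of_all _ hFb)
    rwa [Real.norm_eq_abs] at this
  -- total mass bound
  have hmassP : (P.measure univ).toReal = up - lp := by
    rw [P.measure_univ hPbot hPtop, ENNReal.toReal_ofReal]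
    have : lp ≤ pp h 0 := ciInf_le hpBddB 0
    have : pp h 0 ≤ up := le_ciSup hpBddA 0
    have : lp ≤ up := le_trans (ciInf_le hpBddB 0) (le_ciSup hpBddA 0)
    linarith
  have hmassQ : (Q.measure univ).toReal = uq - lq := by
    rw [Q.measure_univ hQbot hQtop, ENNReal.toReal_ofReal]
    have : lq ≤ uq := le_trans (ciInf_le hqBddB 0) (le_ciSup hqBddA 0)
    linarith
  have hsum : (up - lp) + (uq - lq) ≤ 1 := by
    have htend : Tendsto (fun r : ℝ => (pp h r + qq h r) - (pp h (-r) + qq h (-r)))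
        atTop (nhds ((up + uq) - (lp + lq))) := by
      refine Tendsto.sub (hptop.add hqtop) ?_
      exact (hpbot.add hqbot).comp tendsto_neg_atTop_atBot
    have hev : ∀ᶠ r : ℝ in atTop,
        (pp h r + qq h r) - (pp h (-r) + qq h (-r)) ≤ 1 := by
      filter_upwards [eventually_ge_atTop (0:ℝ)] with r hr
      have hvsum : ∀ x, pp h x + qq h x = vv h x := fun x => by unfold pp qq; ring
      rw [hvsum, hvsum, vv_sub hbv]
      rw [variationOnFromTo.eq_of_le h univ (by linarith : (-r) ≤ r)]
      have h1 : eVariationOn h (univ ∩ Icc (-r) r) ≤ 1 :=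
        le_trans (eVariationOn.mono h inter_subset_left) hvar
      have := ENNReal.toReal_mono ENNReal.one_ne_top h1
      simpa using this
    have := le_of_tendsto htend hev
    linarith
  -- finish
  rw [hdecomp]
  calc |(∫ t, Ff W t ∂P.measure) - ∫ t, Ff W t ∂Q.measure|
      ≤ |∫ t, Ff W t ∂P.measure| + |∫ t, Ff W t ∂Q.measure| := abs_sub _ _
    _ ≤ M * (P.measure univ).toReal + M * (Q.measure univ).toReal := add_le_add hbP hbQ
    _ = M * ((up - lp) + (uq - lq)) := by rw [hmassP, hmassQ]; ring
    _ ≤ M * 1 := by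
        apply mul_le_mul_of_nonneg_left hsum hM0
    _ = M := mul_one M



lemma main_ub {W h : ℝ → ℝ} (hWm : Measurable W) (hWi : Integrable W)
    (hvar : eVariationOn h univ ≤ 1)
    (h0 : Tendsto h (nhdsWithin 0 (Ioi 0)) (nhds 0) ∨
          Tendsto h (nhdsWithin 0 (Iio 0)) (nhds 0))
    {M : ℝ} (hG : ∀ t, 0 ≤ t → |∫ s in Ioi t, W s| ≤ M)
    (hH : ∀ t, t ≤ 0 → |∫ s in Iio t, W s| ≤ M) :
    |∫ s, W s * h s| ≤ M := by
  rcases h0 with h0 | h0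
  · exact core hWm hWi hvar h0 hG hH
  · -- reflect
    have himg : (fun s : ℝ => -s) '' univ = univ := by
      rw [image_univ]
      exact neg_surjective.range_eq
    have hvar' : eVariationOn (fun s => h (-s)) univ ≤ 1 := by
      have := eVariationOn.comp_eq_of_antitoneOn (t := univ) h (fun s : ℝ => -s)
        (fun a _ b _ hab => neg_le_neg hab)
      rw [himg] at this
      calc eVariationOn (fun s => h (-s)) univ
          = eVariationOn (h ∘ fun s : ℝ => -s) univ := rfl
        _ = eVariationOn h univ := this
        _ ≤ 1 := hvar
    have hneg : Tendsto (fun s : ℝ => -s) (nhdsWithin 0 (Ioi 0)) (nhdsWithin 0 (Iio 0)) := by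
      apply tendsto_nhdsWithin_of_tendsto_nhds_of_eventually_within
      · simpa using (continuous_neg.tendsto (0:ℝ)).mono_left nhdsWithin_le_nhds
      · filter_upwards [self_mem_nhdsWithin] with s hs
        simpa using hs
    have h0' : Tendsto (fun s => h (-s)) (nhdsWithin 0 (Ioi 0)) (nhds 0) := h0.comp hneg
    have hG' : ∀ t, 0 ≤ t → |∫ s in Ioi t, W (-s)| ≤ M := by
      intro t ht
      rw [integral_comp_neg_Ioi, integral_Iic_eq_integral_Iio]
      exact hH (-t) (by linarith)
    have hH' : ∀ t, t ≤ 0 → |∫ s in Iio t, W (-s)| ≤ M := by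
      intro t ht
      have e1 : (∫ s in Iio t, W (-s)) = ∫ s in Iic t, W (-s) :=
        (integral_Iic_eq_integral_Iio (f := fun s => W (-s)) (μ := volume)).symm
      rw [e1, integral_comp_neg_Iic]
      exact hG (-t) (by linarith)
    have hc := core (hWm.comp measurable_neg) hWi.comp_neg hvar' h0' hG' hH'
    have heq : ∫ s, (W ∘ Neg.neg) s * h (-s) = ∫ s, W s * h s := by
      simpa [Function.comp] using integral_neg_eq_self (fun s => W s * h s) volume
    rwa [heq] at hc

lemma mono_eVar_le {f : ℝ → ℝ} (hf : Monotone f) {c d : ℝ}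
    (h1 : ∀ x, c ≤ f x) (h2 : ∀ x, f x ≤ d) :
    eVariationOn f univ ≤ ENNReal.ofReal (d - c) := by
  apply iSup_le
  rintro ⟨n, ⟨u, hu, _⟩⟩
  calc
    (∑ i ∈ Finset.range n, edist (f (u (i + 1))) (f (u i))) =
        ∑ i ∈ Finset.range n, ENNReal.ofReal (f (u (i + 1)) - f (u i)) := by
      refine Finset.sum_congr rfl fun i _ => ?_
      rw [edist_dist, Real.dist_eq, abs_of_nonneg]
      exact sub_nonneg_of_le (hf (hu (Nat.le_succ _)))
    _ = ENNReal.ofReal (∑ i ∈ Finset.range n, (f (u (i + 1)) - f (u i))) := by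
      rw [ENNReal.ofReal_sum_of_nonneg]
      intro i _
      exact sub_nonneg_of_le (hf (hu (Nat.le_succ _)))
    _ = ENNReal.ofReal (f (u n) - f (u 0)) := by rw [Finset.sum_range_sub fun i => f (u i)]
    _ ≤ ENNReal.ofReal (d - c) := by
      apply ENNReal.ofReal_le_ofReal
      have := h1 (u 0); have := h2 (u n); linarith

lemma anti_eVar_le {f : ℝ → ℝ} (hf : Antitone f) {c d : ℝ}
    (h1 : ∀ x, c ≤ f x) (h2 : ∀ x, f x ≤ d) :
    eVariationOn f univ ≤ ENNReal.ofReal (d - c) := by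
  have himg : (fun s : ℝ => -s) '' univ = univ := by
    rw [image_univ]; exact neg_surjective.range_eq
  have heq := eVariationOn.comp_eq_of_antitoneOn (t := univ) f (fun s : ℝ => -s)
    (fun a _ b _ hab => neg_le_neg hab)
  rw [himg] at heq
  rw [← heq]
  exact mono_eVar_le (fun a b hab => hf (neg_le_neg hab)) (fun x => h1 (-x)) (fun x => h2 (-x))



lemma indicator_setint (g : ℝ → ℝ) (A B : Set ℝ) (hA : MeasurableSet A) :
    ∫ s in B, A.indicator g s = ∫ s in A ∩ B, g s := by
  rw [integral_indicator hA]
  rw [Measure.restrict_restrict hA]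

lemma integral_wfun_Ioi (j : ℕ) (z t : ℝ) (ht : 0 ≤ t) :
    ∫ s in Ioi t, wfun j z s
      = max (z - t) 0 ^ (j + 1) / (Nat.factorial (j + 1) : ℝ) := by
  have hint1 : Integrable ((Ioc (0:ℝ) z).indicator (gk j z)) :=
    ((gk_cont j z).integrableOn_Ioc).integrable_indicator measurableSet_Ioc
  have hint2 : Integrable ((Ioc z (0:ℝ)).indicator (gk j z)) :=
    ((gk_cont j z).integrableOn_Ioc).integrable_indicator measurableSet_Ioc
  unfold wfun
  rw [integral_sub hint1.integrableOn hint2.integrableOn]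
  have e2 : ∫ s in Ioi t, (Ioc z (0:ℝ)).indicator (gk j z) s = 0 := by
    rw [indicator_setint _ _ _ measurableSet_Ioc]
    have : Ioc z (0:ℝ) ∩ Ioi t = ∅ := by
      ext s
      simp only [mem_inter_iff, mem_Ioc, mem_Ioi, mem_empty_iff_false, iff_false, not_and]
      rintro ⟨h1, h2⟩ h3
      linarith
    rw [this]
    simp
  rw [e2, sub_zero, indicator_setint _ _ _ measurableSet_Ioc]
  rcases le_or_gt z t with hzt | hzt
  · have : Ioc (0:ℝ) z ∩ Ioi t = ∅ := by
      ext s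
      simp only [mem_inter_iff, mem_Ioc, mem_Ioi, mem_empty_iff_false, iff_false, not_and]
      rintro ⟨h1, h2⟩ h3
      linarith
    rw [this, max_eq_right (by linarith : z - t ≤ 0)]
    simp [Nat.factorial_ne_zero]
  · have hset : Ioc (0:ℝ) z ∩ Ioi t = Ioc t z := by
      ext s
      simp only [mem_inter_iff, mem_Ioc, mem_Ioi]
      constructor
      · rintro ⟨⟨h1, h2⟩, h3⟩; exact ⟨h3, h2⟩
      · rintro ⟨h1, h2⟩; exact ⟨⟨lt_of_le_of_lt ht h1, h2⟩, h1⟩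
    rw [hset, ← intervalIntegral.integral_of_le hzt.le, poly_int,
      max_eq_left (by linarith : (0:ℝ) ≤ z - t)]

lemma integral_wfun_Iio (j : ℕ) (z t : ℝ) (ht : t ≤ 0) :
    ∫ s in Iio t, wfun j z s
      = (-1) ^ (j + 1) * max (t - z) 0 ^ (j + 1) / (Nat.factorial (j + 1) : ℝ) := by
  have hint1 : Integrable ((Ioc (0:ℝ) z).indicator (gk j z)) :=
    ((gk_cont j z).integrableOn_Ioc).integrable_indicator measurableSet_Ioc
  have hint2 : Integrable ((Ioc z (0:ℝ)).indicator (gk j z)) :=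
    ((gk_cont j z).integrableOn_Ioc).integrable_indicator measurableSet_Ioc
  unfold wfun
  rw [integral_sub hint1.integrableOn hint2.integrableOn]
  have e1 : ∫ s in Iio t, (Ioc (0:ℝ) z).indicator (gk j z) s = 0 := by
    rw [indicator_setint _ _ _ measurableSet_Ioc]
    have : Ioc (0:ℝ) z ∩ Iio t = ∅ := by
      ext s
      simp only [mem_inter_iff, mem_Ioc, mem_Iio, mem_empty_iff_false, iff_false, not_and]
      rintro ⟨h1, h2⟩ h3
      linarith
    rw [this]
    simp
  rw [e1, zero_sub, indicator_setint _ _ _ measurableSet_Ioc]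
  rcases le_or_gt t z with hzt | hzt
  · have : Ioc z (0:ℝ) ∩ Iio t = ∅ := by
      ext s
      simp only [mem_inter_iff, mem_Ioc, mem_Iio, mem_empty_iff_false, iff_false, not_and]
      rintro ⟨h1, h2⟩ h3
      linarith
    rw [this, max_eq_right (by linarith : t - z ≤ 0)]
    simp [Nat.factorial_ne_zero]
  · have hset : Ioc z (0:ℝ) ∩ Iio t = Ioo z t := by
      ext s
      simp only [mem_inter_iff, mem_Ioc, mem_Ioo, mem_Iio]
      constructor
      · rintro ⟨⟨h1, h2⟩, h3⟩; exact ⟨h1, h3⟩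
      · rintro ⟨h1, h2⟩; exact ⟨⟨h1, by linarith⟩, h2⟩
    rw [hset, ← integral_Ioc_eq_integral_Ioo, ← intervalIntegral.integral_of_le hzt.le,
      poly_int2, max_eq_left (by linarith : (0:ℝ) ≤ t - z)]
    have key : (z - t) ^ (j + 1) = (-1) ^ (j + 1) * (t - z) ^ (j + 1) := by
      rw [show z - t = -(t - z) by ring, neg_pow]
    rw [neg_div, key]
    ring



noncomputable def hR (t : ℝ) : ℝ → ℝ := (Ioi t).indicator (fun _ => (1:ℝ))
noncomputable def hL (t : ℝ) : ℝ → ℝ := (Iio t).indicator (fun _ => (1:ℝ))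

lemma gk_mul_hR (j : ℕ) (z t : ℝ) :
    (fun s => gk j z s * hR t s) = (Ioi t).indicator (gk j z) := by
  funext s
  unfold hR
  by_cases hs : s ∈ Ioi t
  · rw [indicator_of_mem hs, indicator_of_mem hs, mul_one]
  · rw [indicator_of_notMem hs, indicator_of_notMem hs, mul_zero]

lemma gk_mul_hL (j : ℕ) (z t : ℝ) :
    (fun s => gk j z s * hL t s) = (Iio t).indicator (gk j z) := by
  funext s
  unfold hL
  by_cases hs : s ∈ Iio t
  · rw [indicator_of_mem hs, indicator_of_mem hs, mul_one]
  · rw [indicator_of_notMem hs, indicator_of_notMem hs, mul_zero]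

lemma ind_intInt (j : ℕ) (z : ℝ) (A : Set ℝ) (hA : MeasurableSet A) (a b : ℝ) :
    IntervalIntegrable (A.indicator (gk j z)) volume a b := by
  rw [intervalIntegrable_iff]
  unfold IntegrableOn
  rw [integrable_indicator_iff hA]
  unfold IntegrableOn
  rw [Measure.restrict_restrict hA]
  have hsub : A ∩ uIoc a b ⊆ Ioc (min a b) (max a b) := fun s hs => hs.2
  exact ((gk_cont j z).integrableOn_Ioc).mono_set hsub

lemma fR_formula (j : ℕ) (t : ℝ) (ht : 0 ≤ t) (z : ℝ) :
    ∫ s in (0:ℝ)..z, gk j z s * hR t s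
      = max (z - t) 0 ^ (j + 1) / (Nat.factorial (j + 1) : ℝ) := by
  rw [show (fun s => gk j z s * hR t s) = (Ioi t).indicator (gk j z) from gk_mul_hR j z t]
  rcases le_or_gt z t with hzt | hzt
  · have hEq : EqOn ((Ioi t).indicator (gk j z)) 0 (uIcc 0 z) := by
      intro s hs
      have hs2 : s ≤ max 0 z := hs.2
      have : s ∉ Ioi t := by
        simp only [mem_Ioi, not_lt]
        calc s ≤ max 0 z := hs2
          _ ≤ t := max_le ht hzt
      simp [indicator_of_notMem this]
    rw [intervalIntegral.integral_congr hEq]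
    simp only [Pi.zero_apply, intervalIntegral.integral_zero]
    rw [max_eq_right (by linarith : z - t ≤ 0)]
    simp [Nat.factorial_ne_zero]
  · have hsplit := intervalIntegral.integral_add_adjacent_intervals
      (ind_intInt j z (Ioi t) measurableSet_Ioi 0 t)
      (ind_intInt j z (Ioi t) measurableSet_Ioi t z)
    rw [← hsplit]
    have e1 : ∫ s in (0:ℝ)..t, (Ioi t).indicator (gk j z) s = 0 := by
      have hEq : EqOn ((Ioi t).indicator (gk j z)) 0 (uIcc 0 t) := by
        intro s hs
        have hs2 : s ≤ max 0 t := hs.2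
        have : s ∉ Ioi t := by
          simp only [mem_Ioi, not_lt]
          calc s ≤ max 0 t := hs2
            _ = t := max_eq_right ht
        simp [indicator_of_notMem this]
      rw [intervalIntegral.integral_congr hEq]
      simp
    have e2 : ∫ s in t..z, (Ioi t).indicator (gk j z) s
        = (z - t) ^ (j + 1) / (Nat.factorial (j + 1) : ℝ) := by
      rw [intervalIntegral.integral_of_le hzt.le]
      have hEq : EqOn ((Ioi t).indicator (gk j z)) (gk j z) (Ioc t z) := by
        intro s hs
        exact indicator_of_mem hs.1 _
      rw [setIntegral_congr_fun measurableSet_Ioc hEq,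
        ← intervalIntegral.integral_of_le hzt.le, poly_int]
    rw [e1, e2, zero_add, max_eq_left (by linarith : (0:ℝ) ≤ z - t)]

lemma fL_formula (j : ℕ) (t : ℝ) (ht : t ≤ 0) (z : ℝ) :
    ∫ s in (0:ℝ)..z, gk j z s * hL t s
      = (-1) ^ (j + 1) * max (t - z) 0 ^ (j + 1) / (Nat.factorial (j + 1) : ℝ) := by
  rw [show (fun s => gk j z s * hL t s) = (Iio t).indicator (gk j z) from gk_mul_hL j z t]
  rcases le_or_gt t z with hzt | hzt
  · have hEq : EqOn ((Iio t).indicator (gk j z)) 0 (uIcc 0 z) := by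
      intro s hs
      have hs1 : min 0 z ≤ s := hs.1
      have : s ∉ Iio t := by
        simp only [mem_Iio, not_lt]
        calc t ≤ min 0 z := le_min ht hzt
          _ ≤ s := hs1
      simp [indicator_of_notMem this]
    rw [intervalIntegral.integral_congr hEq]
    simp only [Pi.zero_apply, intervalIntegral.integral_zero]
    rw [max_eq_right (by linarith : t - z ≤ 0)]
    simp [Nat.factorial_ne_zero]
  · have hsplit := intervalIntegral.integral_add_adjacent_intervals
      (ind_intInt j z (Iio t) measurableSet_Iio 0 t)
      (ind_intInt j z (Iio t) measurableSet_Iio t z)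
    rw [← hsplit]
    have e1 : ∫ s in (0:ℝ)..t, (Iio t).indicator (gk j z) s = 0 := by
      have hEq : EqOn ((Iio t).indicator (gk j z)) 0 (uIcc 0 t) := by
        intro s hs
        have hs1 : min 0 t ≤ s := hs.1
        have : s ∉ Iio t := by
          simp only [mem_Iio, not_lt]
          calc t = min 0 t := (min_eq_right ht).symm
            _ ≤ s := hs1
        simp [indicator_of_notMem this]
      rw [intervalIntegral.integral_congr hEq]
      simp
    have e2 : ∫ s in t..z, (Iio t).indicator (gk j z) s
        = (z - t) ^ (j + 1) / (Nat.factorial (j + 1) : ℝ) := by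
      rw [intervalIntegral.integral_symm]
      rw [intervalIntegral.integral_of_le hzt.le]
      rw [integral_Ioc_eq_integral_Ioo]
      have hEq : EqOn ((Iio t).indicator (gk j z)) (gk j z) (Ioo z t) := by
        intro s hs
        exact indicator_of_mem (mem_Iio.2 hs.2) (gk j z)
      rw [setIntegral_congr_fun measurableSet_Ioo hEq, ← integral_Ioc_eq_integral_Ioo,
        ← intervalIntegral.integral_of_le hzt.le, poly_int2]
      try ring
    rw [e1, e2, zero_add, max_eq_left (by linarith : (0:ℝ) ≤ t - z)]
    have key : (z - t) ^ (j + 1) = (-1) ^ (j + 1) * (t - z) ^ (j + 1) := by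
      rw [show z - t = -(t - z) by ring, neg_pow]
    rw [key]

lemma hR_apply (t s : ℝ) : hR t s = if t < s then (1:ℝ) else 0 := by
  unfold hR; rw [Set.indicator_apply]; simp [mem_Ioi]

lemma hL_apply (t s : ℝ) : hL t s = if s < t then (1:ℝ) else 0 := by
  unfold hL; rw [Set.indicator_apply]; simp [mem_Iio]

lemma hR_mem_facts (t : ℝ) (ht : 0 ≤ t) :
    eVariationOn (hR t) univ ≤ 1 ∧ Tendsto (hR t) (nhdsWithin 0 (Iio 0)) (nhds 0) := by
  constructor
  · have hmono : Monotone (hR t) := by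
      intro a b hab
      rw [hR_apply, hR_apply]
      split_ifs with h1 h2 <;> try norm_num
      exact absurd (lt_of_lt_of_le h1 hab) h2
    have h01 : ∀ x, (0:ℝ) ≤ hR t x := fun x => by rw [hR_apply]; split_ifs <;> norm_num
    have h11 : ∀ x, hR t x ≤ 1 := fun x => by rw [hR_apply]; split_ifs <;> norm_num
    have := mono_eVar_le hmono h01 h11
    simpa using this
  · have hev : ∀ᶠ s in nhdsWithin (0:ℝ) (Iio 0), hR t s = 0 := by
      filter_upwards [self_mem_nhdsWithin] with s hs
      unfold hR
      apply indicator_of_notMem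
      simp only [mem_Ioi, not_lt]
      exact le_trans (le_of_lt hs) ht
    exact (tendsto_congr' hev).2 tendsto_const_nhds



lemma hL_mem_facts (t : ℝ) (ht : t ≤ 0) :
    eVariationOn (hL t) univ ≤ 1 ∧ Tendsto (hL t) (nhdsWithin 0 (Ioi 0)) (nhds 0) := by
  constructor
  · have hanti : Antitone (hL t) := by
      intro a b hab
      rw [hL_apply, hL_apply]
      split_ifs with h1 h2 <;> try norm_num
      exact absurd (lt_of_le_of_lt hab h1) h2
    have h01 : ∀ x, (0:ℝ) ≤ hL t x := fun x => by rw [hL_apply]; split_ifs <;> norm_num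
    have h11 : ∀ x, hL t x ≤ 1 := fun x => by rw [hL_apply]; split_ifs <;> norm_num
    have := anti_eVar_le hanti h01 h11
    simpa using this
  · have hev : ∀ᶠ s in nhdsWithin (0:ℝ) (Ioi 0), hL t s = 0 := by
      filter_upwards [self_mem_nhdsWithin] with s hs
      rw [hL_apply, if_neg]
      simp only [mem_Ioi] at hs
      exact not_lt.2 (le_trans ht (le_of_lt hs))
    exact (tendsto_congr' hev).2 tendsto_const_nhds

lemma wh_int (j : ℕ) (z : ℝ) {h : ℝ → ℝ} (hm : Measurable h) {c : ℝ}
    (hb : ∀ s, |h s| ≤ c) : Integrable (fun s => wfun j z s * h s) := by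
  have := (wfun_integrable j z).bdd_mul (c := c) hm.aestronglyMeasurable
    (ae_of_all _ fun s => by rw [Real.norm_eq_abs]; exact hb s)
  simpa [mul_comm] using this

lemma ind_mul_int (j : ℕ) (z : ℝ) (A : Set ℝ) (hA : MeasurableSet A)
    (hAi : IntegrableOn (gk j z) A) {h : ℝ → ℝ} (hm : Measurable h) {c : ℝ}
    (hb : ∀ s, |h s| ≤ c) : Integrable (fun s => A.indicator (gk j z) s * h s) := by
  have := (hAi.integrable_indicator hA).bdd_mul (c := c) hm.aestronglyMeasurable
    (ae_of_all _ fun s => by rw [Real.norm_eq_abs]; exact hb s)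
  simpa [mul_comm] using this

lemma repr (j : ℕ) (z : ℝ) {h : ℝ → ℝ} (hm : Measurable h) {c : ℝ}
    (hb : ∀ s, |h s| ≤ c) :
    ∫ s in (0:ℝ)..z, gk j z s * h s = ∫ s, wfun j z s * h s := by
  have ih1 : Integrable (fun s => (Ioc (0:ℝ) z).indicator (gk j z) s * h s) :=
    ind_mul_int j z _ measurableSet_Ioc ((gk_cont j z).integrableOn_Ioc) hm hb
  have ih2 : Integrable (fun s => (Ioc z (0:ℝ)).indicator (gk j z) s * h s) :=
    ind_mul_int j z _ measurableSet_Ioc ((gk_cont j z).integrableOn_Ioc) hm hb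
  have hw : (fun s => wfun j z s * h s)
      = fun s => (Ioc (0:ℝ) z).indicator (gk j z) s * h s
          - (Ioc z (0:ℝ)).indicator (gk j z) s * h s := by
    funext s; unfold wfun; ring
  rw [hw, integral_sub ih1 ih2]
  have e : ∀ A : Set ℝ, MeasurableSet A →
      (∫ s, A.indicator (gk j z) s * h s) = ∫ s in A, gk j z s * h s := by
    intro A hA
    rw [← integral_indicator hA]
    congr 1
    funext s
    by_cases hs : s ∈ A
    · rw [indicator_of_mem hs, indicator_of_mem hs]
    · rw [indicator_of_notMem hs, indicator_of_notMem hs, zero_mul]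
  rw [e _ measurableSet_Ioc, e _ measurableSet_Ioc]
  rcases le_total 0 z with h0z | hz0
  · rw [intervalIntegral.integral_of_le h0z]
    rw [Ioc_eq_empty (not_lt.2 h0z)]
    simp
  · rw [intervalIntegral.integral_of_ge hz0]
    rw [Ioc_eq_empty (not_lt.2 hz0)]
    simp

noncomputable def Wc (j m n : ℕ) (x : Fin m → ℝ) (y : Fin n → ℝ) : ℝ → ℝ :=
  fun s => (1 / m : ℝ) * ∑ i, wfun j (x i) s - (1 / n : ℝ) * ∑ i, wfun j (y i) s

lemma Wc_meas (j m n : ℕ) (x : Fin m → ℝ) (y : Fin n → ℝ) : Measurable (Wc j m n x y) := by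
  unfold Wc
  apply Measurable.sub
  · exact (Finset.measurable_sum Finset.univ (fun i _ => wfun_meas j (x i))).const_mul _
  · exact (Finset.measurable_sum Finset.univ (fun i _ => wfun_meas j (y i))).const_mul _

lemma Wc_int (j m n : ℕ) (x : Fin m → ℝ) (y : Fin n → ℝ) : Integrable (Wc j m n x y) := by
  unfold Wc
  apply Integrable.sub
  · exact (integrable_finset_sum Finset.univ (fun i _ => wfun_integrable j (x i))).const_mul _
  · exact (integrable_finset_sum Finset.univ (fun i _ => wfun_integrable j (y i))).const_mul _

lemma Wc_int_Ioi (j m n : ℕ) (x : Fin m → ℝ) (y : Fin n → ℝ) (t : ℝ) (ht : 0 ≤ t) :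
    ∫ s in Ioi t, Wc j m n x y s
      = ((1 / m : ℝ) * ∑ i, max (x i - t) 0 ^ (j + 1)
          - (1 / n : ℝ) * ∑ i, max (y i - t) 0 ^ (j + 1)) / (Nat.factorial (j + 1) : ℝ) := by
  unfold Wc
  rw [integral_sub
    (((integrable_finset_sum Finset.univ (fun i _ => wfun_integrable j (x i))).const_mul _).integrableOn)
    (((integrable_finset_sum Finset.univ (fun i _ => wfun_integrable j (y i))).const_mul _).integrableOn),
    integral_const_mul, integral_const_mul,
    integral_finset_sum _ (fun i _ => (wfun_integrable j (x i)).integrableOn),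
    integral_finset_sum _ (fun i _ => (wfun_integrable j (y i)).integrableOn)]
  simp only [fun i : Fin m => integral_wfun_Ioi j (x i) t ht,
    fun i : Fin n => integral_wfun_Ioi j (y i) t ht]
  rw [← Finset.sum_div, ← Finset.sum_div]
  ring

lemma Wc_int_Iio (j m n : ℕ) (x : Fin m → ℝ) (y : Fin n → ℝ) (t : ℝ) (ht : t ≤ 0) :
    ∫ s in Iio t, Wc j m n x y s
      = (-1) ^ (j + 1) * ((1 / m : ℝ) * ∑ i, max (t - x i) 0 ^ (j + 1)
          - (1 / n : ℝ) * ∑ i, max (t - y i) 0 ^ (j + 1)) / (Nat.factorial (j + 1) : ℝ) := by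
  unfold Wc
  rw [integral_sub
    (((integrable_finset_sum Finset.univ (fun i _ => wfun_integrable j (x i))).const_mul _).integrableOn)
    (((integrable_finset_sum Finset.univ (fun i _ => wfun_integrable j (y i))).const_mul _).integrableOn),
    integral_const_mul, integral_const_mul,
    integral_finset_sum _ (fun i _ => (wfun_integrable j (x i)).integrableOn),
    integral_finset_sum _ (fun i _ => (wfun_integrable j (y i)).integrableOn)]
  simp only [fun i : Fin m => integral_wfun_Iio j (x i) t ht,
    fun i : Fin n => integral_wfun_Iio j (y i) t ht]
  rw [← Finset.sum_div, ← Finset.sum_div, ← Finset.mul_sum, ← Finset.mul_sum]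
  ring

end Stmt2Aux

open Stmt2Aux

theorem stmt2 (k m n : ℕ) (hk : 1 ≤ k) (hm : 1 ≤ m) (hn : 1 ≤ n)
    (x : Fin m → ℝ) (y : Fin n → ℝ) :
    (⨆ f ∈ Fk k, |(1 / m : ℝ) * ∑ i, f (x i) - (1 / n : ℝ) * ∑ j, f (y j)|)
      = max
        (⨆ t : Set.Ici (0:ℝ), (1 / (Nat.factorial k : ℝ)) *
          |(1 / m : ℝ) * ∑ i, max (x i - (t:ℝ)) 0 ^ k
            - (1 / n : ℝ) * ∑ j, max (y j - (t:ℝ)) 0 ^ k|)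
        (⨆ t : Set.Iic (0:ℝ), (1 / (Nat.factorial k : ℝ)) *
          |(1 / m : ℝ) * ∑ i, max ((t:ℝ) - x i) 0 ^ k
            - (1 / n : ℝ) * ∑ j, max ((t:ℝ) - y j) 0 ^ k|) := by
  obtain ⟨j, rfl⟩ : ∃ j, k = j + 1 := ⟨k - 1, (Nat.succ_pred_eq_of_pos hk).symm⟩
  have hc0 : (0:ℝ) < (Nat.factorial (j + 1) : ℝ) := by
    exact_mod_cast Nat.factorial_pos (j + 1)
  haveI : Nonempty (Set.Ici (0:ℝ)) := ⟨⟨0, mem_Ici.2 (le_refl 0)⟩⟩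
  haveI : Nonempty (Set.Iic (0:ℝ)) := ⟨⟨0, mem_Iic.2 (le_refl 0)⟩⟩
  set M : ℝ := max
        (⨆ t : Set.Ici (0:ℝ), (1 / (Nat.factorial (j+1) : ℝ)) *
          |(1 / m : ℝ) * ∑ i, max (x i - (t:ℝ)) 0 ^ (j+1)
            - (1 / n : ℝ) * ∑ i, max (y i - (t:ℝ)) 0 ^ (j+1)|)
        (⨆ t : Set.Iic (0:ℝ), (1 / (Nat.factorial (j+1) : ℝ)) *
          |(1 / m : ℝ) * ∑ i, max ((t:ℝ) - x i) 0 ^ (j+1)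
            - (1 / n : ℝ) * ∑ i, max ((t:ℝ) - y i) 0 ^ (j+1)|) with hM
  -- boundedness of the two sup families
  have habsmaxR : ∀ (a t : ℝ), 0 ≤ t → max (a - t) 0 ^ (j+1) ≤ |a| ^ (j+1) := by
    intro a t ht
    apply pow_le_pow_left₀ (le_max_right _ _)
    apply max_le _ (abs_nonneg a)
    calc a - t ≤ a := by linarith
      _ ≤ |a| := le_abs_self a
  have habsmaxL : ∀ (a t : ℝ), t ≤ 0 → max (t - a) 0 ^ (j+1) ≤ |a| ^ (j+1) := by
    intro a t ht
    apply pow_le_pow_left₀ (le_max_right _ _)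
    apply max_le _ (abs_nonneg a)
    calc t - a ≤ -a := by linarith
      _ ≤ |a| := neg_le_abs a
  have havg : ∀ (N : ℕ) (w b : Fin N → ℝ), (∀ i, |w i| ≤ b i) →
      |(1 / N : ℝ) * ∑ i, w i| ≤ (1 / N : ℝ) * ∑ i, b i := by
    intro N w b hb
    rw [abs_mul, abs_of_nonneg (by positivity : (0:ℝ) ≤ 1 / N)]
    apply mul_le_mul_of_nonneg_left _ (by positivity : (0:ℝ) ≤ 1 / N)
    exact (Finset.abs_sum_le_sum_abs _ _).trans (Finset.sum_le_sum fun i _ => hb i)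
  set R : ℝ := (1 / (Nat.factorial (j+1) : ℝ)) *
      ((1 / m : ℝ) * ∑ i, |x i| ^ (j+1) + (1 / n : ℝ) * ∑ i, |y i| ^ (j+1)) with hR'
  have hBdd1 : BddAbove (Set.range fun t : Set.Ici (0:ℝ) =>
      (1 / (Nat.factorial (j+1) : ℝ)) *
        |(1 / m : ℝ) * ∑ i, max (x i - (t:ℝ)) 0 ^ (j+1)
          - (1 / n : ℝ) * ∑ i, max (y i - (t:ℝ)) 0 ^ (j+1)|) := by
    refine ⟨R, ?_⟩
    rintro _ ⟨⟨t, ht⟩, rfl⟩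
    have h1 : |(1 / m : ℝ) * ∑ i, max (x i - t) 0 ^ (j+1)| ≤ (1 / m : ℝ) * ∑ i, |x i| ^ (j+1) := by
      apply havg
      intro i
      rw [abs_of_nonneg (by positivity : (0:ℝ) ≤ max (x i - t) 0 ^ (j+1))]
      exact habsmaxR (x i) t ht
    have h2 : |(1 / n : ℝ) * ∑ i, max (y i - t) 0 ^ (j+1)| ≤ (1 / n : ℝ) * ∑ i, |y i| ^ (j+1) := by
      apply havg
      intro i
      rw [abs_of_nonneg (by positivity : (0:ℝ) ≤ max (y i - t) 0 ^ (j+1))]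
      exact habsmaxR (y i) t ht
    rw [hR']
    apply mul_le_mul_of_nonneg_left _ (by positivity : (0:ℝ) ≤ 1 / (Nat.factorial (j+1) : ℝ))
    calc |(1 / m : ℝ) * ∑ i, max (x i - t) 0 ^ (j+1)
          - (1 / n : ℝ) * ∑ i, max (y i - t) 0 ^ (j+1)|
        ≤ |(1 / m : ℝ) * ∑ i, max (x i - t) 0 ^ (j+1)|
          + |(1 / n : ℝ) * ∑ i, max (y i - t) 0 ^ (j+1)| := abs_sub _ _
      _ ≤ _ := add_le_add h1 h2
  have hBdd2 : BddAbove (Set.range fun t : Set.Iic (0:ℝ) =>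
      (1 / (Nat.factorial (j+1) : ℝ)) *
        |(1 / m : ℝ) * ∑ i, max ((t:ℝ) - x i) 0 ^ (j+1)
          - (1 / n : ℝ) * ∑ i, max ((t:ℝ) - y i) 0 ^ (j+1)|) := by
    refine ⟨R, ?_⟩
    rintro _ ⟨⟨t, ht⟩, rfl⟩
    have h1 : |(1 / m : ℝ) * ∑ i, max (t - x i) 0 ^ (j+1)| ≤ (1 / m : ℝ) * ∑ i, |x i| ^ (j+1) := by
      apply havg
      intro i
      rw [abs_of_nonneg (by positivity : (0:ℝ) ≤ max (t - x i) 0 ^ (j+1))]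
      exact habsmaxL (x i) t ht
    have h2 : |(1 / n : ℝ) * ∑ i, max (t - y i) 0 ^ (j+1)| ≤ (1 / n : ℝ) * ∑ i, |y i| ^ (j+1) := by
      apply havg
      intro i
      rw [abs_of_nonneg (by positivity : (0:ℝ) ≤ max (t - y i) 0 ^ (j+1))]
      exact habsmaxL (y i) t ht
    rw [hR']
    apply mul_le_mul_of_nonneg_left _ (by positivity : (0:ℝ) ≤ 1 / (Nat.factorial (j+1) : ℝ))
    calc |(1 / m : ℝ) * ∑ i, max (t - x i) 0 ^ (j+1)
          - (1 / n : ℝ) * ∑ i, max (t - y i) 0 ^ (j+1)|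
        ≤ |(1 / m : ℝ) * ∑ i, max (t - x i) 0 ^ (j+1)|
          + |(1 / n : ℝ) * ∑ i, max (t - y i) 0 ^ (j+1)| := abs_sub _ _
      _ ≤ _ := add_le_add h1 h2
  have hM0 : 0 ≤ M := by
    rw [hM]
    refine le_trans ?_ (le_max_left _ _)
    exact Real.iSup_nonneg fun t => by positivity
  -- upper bound
  have hup : ∀ f : ℝ → ℝ, f ∈ Fk (j+1) →
      |(1 / m : ℝ) * ∑ i, f (x i) - (1 / n : ℝ) * ∑ i, f (y i)| ≤ M := by
    rintro f ⟨h, hvar, h0, hf⟩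
    have hbv : BoundedVariationOn h univ := ne_top_of_le_ne_top ENNReal.one_ne_top hvar
    have hmeas : Measurable h := h_meas hbv
    have hb : ∀ s, |h s| ≤ |h 0| + (eVariationOn h univ).toReal := h_bound hbv
    have hrepr : ∀ z, f z = ∫ s, wfun j z s * h s := by
      intro z
      rw [hf z]
      exact repr j z hmeas hb
    have intA : Integrable (fun s => (1 / m : ℝ) * ∑ i, wfun j (x i) s * h s) :=
      (integrable_finset_sum Finset.univ (fun i _ => wh_int j (x i) hmeas hb)).const_mul _
    have intB : Integrable (fun s => (1 / n : ℝ) * ∑ i, wfun j (y i) s * h s) :=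
      (integrable_finset_sum Finset.univ (fun i _ => wh_int j (y i) hmeas hb)).const_mul _
    have hDeq : (1 / m : ℝ) * ∑ i, f (x i) - (1 / n : ℝ) * ∑ i, f (y i)
        = ∫ s, Wc j m n x y s * h s := by
      have hWh : (fun s => Wc j m n x y s * h s)
          = fun s => (1 / m : ℝ) * (∑ i, wfun j (x i) s * h s)
              - (1 / n : ℝ) * (∑ i, wfun j (y i) s * h s) := by
        funext s
        unfold Wc
        rw [sub_mul, mul_assoc, mul_assoc, Finset.sum_mul, Finset.sum_mul]
      rw [hWh, integral_sub intA intB, integral_const_mul, integral_const_mul,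
        integral_finset_sum _ (fun i _ => wh_int j (x i) hmeas hb),
        integral_finset_sum _ (fun i _ => wh_int j (y i) hmeas hb)]
      have e1 : (∑ i, ∫ s, wfun j (x i) s * h s) = ∑ i, f (x i) :=
        Finset.sum_congr rfl (fun i _ => (hrepr (x i)).symm)
      have e2 : (∑ i, ∫ s, wfun j (y i) s * h s) = ∑ i, f (y i) :=
        Finset.sum_congr rfl (fun i _ => (hrepr (y i)).symm)
      rw [e1, e2]
    rw [hDeq]
    apply main_ub (Wc_meas j m n x y) (Wc_int j m n x y) hvar h0
    · intro t ht
      rw [Wc_int_Ioi j m n x y t ht, abs_div, abs_of_nonneg hc0.le]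
      have e : |(1 / m : ℝ) * ∑ i, max (x i - t) 0 ^ (j+1)
          - (1 / n : ℝ) * ∑ i, max (y i - t) 0 ^ (j+1)| / (Nat.factorial (j+1) : ℝ)
          = (1 / (Nat.factorial (j+1) : ℝ)) *
            |(1 / m : ℝ) * ∑ i, max (x i - t) 0 ^ (j+1)
              - (1 / n : ℝ) * ∑ i, max (y i - t) 0 ^ (j+1)| := by ring
      rw [e]
      refine le_trans ?_ (le_max_left _ _)
      exact le_ciSup hBdd1 ⟨t, ht⟩
    · intro t ht
      rw [Wc_int_Iio j m n x y t ht, abs_div, abs_mul, abs_pow, abs_neg, abs_one, one_pow,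
        one_mul, abs_of_nonneg hc0.le]
      have e : |(1 / m : ℝ) * ∑ i, max (t - x i) 0 ^ (j+1)
          - (1 / n : ℝ) * ∑ i, max (t - y i) 0 ^ (j+1)| / (Nat.factorial (j+1) : ℝ)
          = (1 / (Nat.factorial (j+1) : ℝ)) *
            |(1 / m : ℝ) * ∑ i, max (t - x i) 0 ^ (j+1)
              - (1 / n : ℝ) * ∑ i, max (t - y i) 0 ^ (j+1)| := by ring
      rw [e]
      refine le_trans ?_ (le_max_right _ _)
      exact le_ciSup hBdd2 ⟨t, ht⟩
  -- conclusion
  apply le_antisymm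
  · exact Real.iSup_le (fun f => Real.iSup_le (fun hf => hup f hf) hM0) hM0
  · have hbddPhi : BddAbove (Set.range fun f : ℝ → ℝ =>
        ⨆ _ : f ∈ Fk (j+1), |(1 / m : ℝ) * ∑ i, f (x i) - (1 / n : ℝ) * ∑ i, f (y i)|) := by
      refine ⟨M, ?_⟩
      rintro _ ⟨f, rfl⟩
      exact Real.iSup_le (fun hf => hup f hf) hM0
    have hLHS0 : 0 ≤ ⨆ f, ⨆ _ : f ∈ Fk (j+1),
        |(1 / m : ℝ) * ∑ i, f (x i) - (1 / n : ℝ) * ∑ i, f (y i)| :=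
      Real.iSup_nonneg fun f => Real.iSup_nonneg fun _ => abs_nonneg _
    apply max_le
    · apply Real.iSup_le _ hLHS0
      rintro ⟨t, ht⟩
      have hmemf : (fun z => max (z - t) 0 ^ (j+1) / (Nat.factorial (j+1) : ℝ)) ∈ Fk (j+1) :=
        ⟨hR t, (hR_mem_facts t ht).1, Or.inr (hR_mem_facts t ht).2,
          fun z => (fR_formula j t ht z).symm⟩
      have hval : (1 / (Nat.factorial (j+1) : ℝ)) *
          |(1 / m : ℝ) * ∑ i, max (x i - t) 0 ^ (j+1)
            - (1 / n : ℝ) * ∑ i, max (y i - t) 0 ^ (j+1)|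
          = |(1 / m : ℝ) * ∑ i, max (x i - t) 0 ^ (j+1) / (Nat.factorial (j+1) : ℝ)
              - (1 / n : ℝ) * ∑ i, max (y i - t) 0 ^ (j+1) / (Nat.factorial (j+1) : ℝ)| := by
        rw [← Finset.sum_div, ← Finset.sum_div]
        rw [show (1 / m : ℝ) * ((∑ i, max (x i - t) 0 ^ (j+1)) / (Nat.factorial (j+1) : ℝ))
            - (1 / n : ℝ) * ((∑ i, max (y i - t) 0 ^ (j+1)) / (Nat.factorial (j+1) : ℝ))
            = ((1 / m : ℝ) * ∑ i, max (x i - t) 0 ^ (j+1)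
              - (1 / n : ℝ) * ∑ i, max (y i - t) 0 ^ (j+1)) / (Nat.factorial (j+1) : ℝ)
          from by ring]
        rw [abs_div, abs_of_nonneg hc0.le]
        ring
      rw [hval]
      haveI : Nonempty ((fun z => max (z - t) 0 ^ (j+1) / (Nat.factorial (j+1) : ℝ)) ∈ Fk (j+1)) :=
        ⟨hmemf⟩
      calc |(1 / m : ℝ) * ∑ i, max (x i - t) 0 ^ (j+1) / (Nat.factorial (j+1) : ℝ)
            - (1 / n : ℝ) * ∑ i, max (y i - t) 0 ^ (j+1) / (Nat.factorial (j+1) : ℝ)|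
          = ⨆ _ : (fun z => max (z - t) 0 ^ (j+1) / (Nat.factorial (j+1) : ℝ)) ∈ Fk (j+1),
            |(1 / m : ℝ) * ∑ i, max (x i - t) 0 ^ (j+1) / (Nat.factorial (j+1) : ℝ)
              - (1 / n : ℝ) * ∑ i, max (y i - t) 0 ^ (j+1) / (Nat.factorial (j+1) : ℝ)| :=
            ciSup_const.symm
        _ ≤ _ := le_ciSup hbddPhi (fun z => max (z - t) 0 ^ (j+1) / (Nat.factorial (j+1) : ℝ))
    · apply Real.iSup_le _ hLHS0
      rintro ⟨t, ht⟩
      have hmemf : (fun z => (-1:ℝ)^(j+1) * max (t - z) 0 ^ (j+1) / (Nat.factorial (j+1) : ℝ))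
          ∈ Fk (j+1) :=
        ⟨hL t, (hL_mem_facts t ht).1, Or.inl (hL_mem_facts t ht).2,
          fun z => (fL_formula j t ht z).symm⟩
      have hval : (1 / (Nat.factorial (j+1) : ℝ)) *
          |(1 / m : ℝ) * ∑ i, max (t - x i) 0 ^ (j+1)
            - (1 / n : ℝ) * ∑ i, max (t - y i) 0 ^ (j+1)|
          = |(1 / m : ℝ) * ∑ i, (-1:ℝ)^(j+1) * max (t - x i) 0 ^ (j+1) / (Nat.factorial (j+1) : ℝ)
              - (1 / n : ℝ) * ∑ i, (-1:ℝ)^(j+1) * max (t - y i) 0 ^ (j+1) / (Nat.factorial (j+1) : ℝ)| := by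
        rw [← Finset.sum_div, ← Finset.sum_div, ← Finset.mul_sum, ← Finset.mul_sum]
        rw [show (1 / m : ℝ) * ((-1:ℝ)^(j+1) * (∑ i, max (t - x i) 0 ^ (j+1)) / (Nat.factorial (j+1) : ℝ))
            - (1 / n : ℝ) * ((-1:ℝ)^(j+1) * (∑ i, max (t - y i) 0 ^ (j+1)) / (Nat.factorial (j+1) : ℝ))
            = (-1:ℝ)^(j+1) * ((1 / m : ℝ) * ∑ i, max (t - x i) 0 ^ (j+1)
              - (1 / n : ℝ) * ∑ i, max (t - y i) 0 ^ (j+1)) / (Nat.factorial (j+1) : ℝ)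
          from by ring]
        rw [abs_div, abs_mul, abs_pow, abs_neg, abs_one, one_pow, one_mul,
          abs_of_nonneg hc0.le]
        ring
      rw [hval]
      haveI : Nonempty ((fun z => (-1:ℝ)^(j+1) * max (t - z) 0 ^ (j+1)
          / (Nat.factorial (j+1) : ℝ)) ∈ Fk (j+1)) := ⟨hmemf⟩
      calc |(1 / m : ℝ) * ∑ i, (-1:ℝ)^(j+1) * max (t - x i) 0 ^ (j+1) / (Nat.factorial (j+1) : ℝ)
            - (1 / n : ℝ) * ∑ i, (-1:ℝ)^(j+1) * max (t - y i) 0 ^ (j+1) / (Nat.factorial (j+1) : ℝ)|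
          = ⨆ _ : (fun z => (-1:ℝ)^(j+1) * max (t - z) 0 ^ (j+1)
              / (Nat.factorial (j+1) : ℝ)) ∈ Fk (j+1),
            |(1 / m : ℝ) * ∑ i, (-1:ℝ)^(j+1) * max (t - x i) 0 ^ (j+1) / (Nat.factorial (j+1) : ℝ)
              - (1 / n : ℝ) * ∑ i, (-1:ℝ)^(j+1) * max (t - y i) 0 ^ (j+1) / (Nat.factorial (j+1) : ℝ)| :=
            ciSup_const.symm
        _ ≤ _ := le_ciSup hbddPhi (fun z => (-1:ℝ)^(j+1) * max (t - z) 0 ^ (j+1)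
            / (Nat.factorial (j+1) : ℝ))
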